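/- Let E be a finite set, f : 2^E → ℝ≥0 a nonnegative submodular set function, and F : [0,1]^E → ℝ its multilinear extension. Then for every x ∈ [0,1]^E and every real k ≥ 1 it holds that F(x) ≤ k · F(x/k). -/

import Mathlib

open Finset

/-- A set function is submodular if marginal gains diminish as the set grows. -/
def SubmodularFn {α : Type*} [DecidableEq α] (f : Finset α → ℝ) : Prop :=
  ∀ ⦃X Y : Finset α⦄, X ⊆ Y → ∀ u, u ∉ Y → f (insert u Y) - f Y ≤ f (insert u X) - f X

/-- The multilinear extension of a set function `f`:
`F x = ∑_{X ⊆ E} f X · ∏_{u ∈ X} x u · ∏_{u ∉ X} (1 − x u)`. -/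
noncomputable def mlext {α : Type*} [Fintype α] [DecidableEq α]
    (f : Finset α → ℝ) (x : α → ℝ) : ℝ :=
  ∑ X : Finset α, f X * (∏ u ∈ X, x u) * ∏ u ∈ Xᶜ, (1 - x u)

/-- The expected value of `f` on a random subset of `X` keeping each element with prob `p`. -/
noncomputable def mG {α : Type*} [DecidableEq α] (f : Finset α → ℝ) (X : Finset α) (p : ℝ) : ℝ :=
  ∑ S ∈ X.powerset, p ^ S.card * (1 - p) ^ (X \ S).card * f S

lemma sum_coeff {α : Type*} [DecidableEq α] (X : Finset α) (p : ℝ) :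
    ∑ S ∈ X.powerset, p ^ S.card * (1 - p) ^ (X \ S).card = 1 := by
  have h := Finset.prod_add (fun _ : α => p) (fun _ => 1 - p) X
  simp [Finset.prod_const] at h
  linarith [h]

lemma lemB {α : Type*} [DecidableEq α] (f : Finset α → ℝ) (hf0 : ∀ X, 0 ≤ f X)
    (hsub : SubmodularFn f) (p : ℝ) (hp0 : 0 ≤ p) (hp1 : p ≤ 1) :
    ∀ X : Finset α, p * f X ≤ mG f X p := by
  intro X
  induction X using Finset.induction_on with
  | empty =>
      simp [mG]
      nlinarith [hf0 (∅ : Finset α)]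
  | @insert a X ha ih =>
      have hsplit : mG f (insert a X) p
          = (1 - p) * mG f X p
            + p * ∑ S ∈ X.powerset, p ^ S.card * (1 - p) ^ (X \ S).card * f (insert a S) := by
        rw [mG, Finset.powerset_insert, Finset.sum_union]
        · congr 1
          · rw [mG, Finset.mul_sum]
            apply Finset.sum_congr rfl
            intro S hS
            rw [Finset.mem_powerset] at hS
            have haS : a ∉ S := fun h => ha (hS h)
            have : insert a X \ S = insert a (X \ S) := by
              ext u; simp only [Finset.mem_sdiff, Finset.mem_insert]
              constructor
              · rintro ⟨h1 | h1, h2⟩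
                · exact Or.inl h1
                · exact Or.inr ⟨h1, h2⟩
              · rintro (rfl | ⟨h1, h2⟩)
                · exact ⟨Or.inl rfl, haS⟩
                · exact ⟨Or.inr h1, h2⟩
            rw [this, Finset.card_insert_of_notMem (by simp [ha])]
            ring
          · rw [Finset.sum_image (by
              intro S hS T hT hST
              rw [Finset.mem_coe, Finset.mem_powerset] at hS hT
              have haS : a ∉ S := fun h => ha (hS h)
              have haT : a ∉ T := fun h => ha (hT h)
              have := congrArg (fun s => Finset.erase s a) hST
              simpa [Finset.erase_insert haS, Finset.erase_insert haT] using this)]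
            rw [Finset.mul_sum]
            apply Finset.sum_congr rfl
            intro S hS
            rw [Finset.mem_powerset] at hS
            have haS : a ∉ S := fun h => ha (hS h)
            have h1 : insert a X \ insert a S = X \ S := by
              ext u; simp only [Finset.mem_sdiff, Finset.mem_insert]
              constructor
              · rintro ⟨h1 | h1, h2⟩
                · exact absurd (Or.inl h1) h2
                · exact ⟨h1, fun hu => h2 (Or.inr hu)⟩
              · rintro ⟨h1, h2⟩
                refine ⟨Or.inr h1, ?_⟩
                rintro (rfl | hu)
                · exact ha h1
                · exact h2 hu
            rw [h1, Finset.card_insert_of_notMem haS]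
            ring
        · rw [Finset.disjoint_left]
          intro S hS hS'
          rw [Finset.mem_powerset] at hS
          rw [Finset.mem_image] at hS'
          obtain ⟨T, _, rfl⟩ := hS'
          exact ha (hS (Finset.mem_insert_self a T))
      have hterm : ∀ S ∈ X.powerset,
          p ^ S.card * (1 - p) ^ (X \ S).card * (f S + (f (insert a X) - f X))
            ≤ p ^ S.card * (1 - p) ^ (X \ S).card * f (insert a S) := by
        intro S hS
        rw [Finset.mem_powerset] at hS
        have := hsub hS a ha
        have hc : 0 ≤ p ^ S.card * (1 - p) ^ (X \ S).card :=
          mul_nonneg (pow_nonneg hp0 _) (pow_nonneg (by linarith) _)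
        nlinarith [this, hc]
      have hsum : mG f X p + (f (insert a X) - f X)
          ≤ ∑ S ∈ X.powerset, p ^ S.card * (1 - p) ^ (X \ S).card * f (insert a S) := by
        calc mG f X p + (f (insert a X) - f X)
            = ∑ S ∈ X.powerset,
                p ^ S.card * (1 - p) ^ (X \ S).card * (f S + (f (insert a X) - f X)) := by
              rw [mG]
              simp only [mul_add]
              rw [Finset.sum_add_distrib, ← Finset.sum_mul, sum_coeff, one_mul]
          _ ≤ _ := Finset.sum_le_sum hterm
      rw [hsplit]
      nlinarith [ih, hsum, hf0 (insert a X), hf0 X]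

lemma lemA {α : Type*} [Fintype α] [DecidableEq α] (x : α → ℝ) (p : ℝ) (S : Finset α) :
    ∑ X ∈ univ.filter (fun X : Finset α => S ⊆ X),
        (∏ u ∈ X, x u) * (∏ u ∈ Xᶜ, (1 - x u)) * (1 - p) ^ (X \ S).card
      = (∏ u ∈ S, x u) * ∏ u ∈ Sᶜ, (1 - p * x u) := by
  have hexp : ∏ u ∈ Sᶜ, (1 - p * x u)
      = ∑ T ∈ Sᶜ.powerset, (∏ u ∈ T, ((1 - p) * x u)) * ∏ u ∈ Sᶜ \ T, (1 - x u) := by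
    rw [← Finset.prod_add]
    apply Finset.prod_congr rfl
    intro u _
    ring
  rw [hexp, Finset.mul_sum]
  apply Finset.sum_nbij' (fun X => X \ S) (fun T => S ∪ T)
  · intro X hX
    rw [Finset.mem_filter] at hX
    rw [Finset.mem_powerset]
    intro u hu
    rw [Finset.mem_sdiff] at hu
    simp [hu.2]
  · intro T hT
    rw [Finset.mem_powerset] at hT
    rw [Finset.mem_filter]
    exact ⟨Finset.mem_univ _, Finset.subset_union_left⟩
  · intro X hX
    rw [Finset.mem_filter] at hX
    exact Finset.union_sdiff_of_subset hX.2
  · intro T hT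
    rw [Finset.mem_powerset] at hT
    rw [Finset.union_sdiff_left]
    apply Finset.sdiff_eq_self_of_disjoint
    rw [Finset.disjoint_left]
    intro u hu hu'
    exact (Finset.mem_compl.mp (hT hu)) hu'
  · intro X hX
    rw [Finset.mem_filter] at hX
    have hS : S ⊆ X := hX.2
    have hd : Disjoint S (X \ S) := Finset.disjoint_sdiff
    have hu : S ∪ (X \ S) = X := Finset.union_sdiff_of_subset hS
    have hprod : ∏ u ∈ X, x u = (∏ u ∈ S, x u) * ∏ u ∈ X \ S, x u := by
      rw [← hu, Finset.prod_union hd, hu]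
    have hTprod : ∏ u ∈ X \ S, ((1 - p) * x u)
        = (1 - p) ^ (X \ S).card * ∏ u ∈ X \ S, x u := by
      rw [Finset.prod_mul_distrib, Finset.prod_const]
    have hcompl : Xᶜ = Sᶜ \ (X \ S) := by
      ext u
      simp only [Finset.mem_compl, Finset.mem_sdiff]
      constructor
      · intro h; exact ⟨fun hs => h (hS hs), fun h' => h h'.1⟩
      · intro ⟨h1, h2⟩ hx
        exact h2 ⟨hx, h1⟩
    rw [hprod, hTprod, hcompl]
    ring

lemma lemI {α : Type*} [Fintype α] [DecidableEq α] (f : Finset α → ℝ) (x : α → ℝ) (p : ℝ) :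
    mlext f (fun u => p * x u)
      = ∑ X : Finset α, (∏ u ∈ X, x u) * (∏ u ∈ Xᶜ, (1 - x u)) * mG f X p := by
  symm
  have hpow : ∀ X : Finset α, X.powerset = univ.filter (fun S => S ⊆ X) := by
    intro X; ext S; simp
  calc ∑ X : Finset α, (∏ u ∈ X, x u) * (∏ u ∈ Xᶜ, (1 - x u)) * mG f X p
      = ∑ X : Finset α, ∑ S : Finset α, (if S ⊆ X then
          (∏ u ∈ X, x u) * (∏ u ∈ Xᶜ, (1 - x u))
            * (p ^ S.card * (1 - p) ^ (X \ S).card * f S) else 0) := by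
        apply Finset.sum_congr rfl
        intro X _
        rw [mG, Finset.mul_sum, hpow X, Finset.sum_filter]
    _ = ∑ S : Finset α, ∑ X : Finset α, (if S ⊆ X then
          (∏ u ∈ X, x u) * (∏ u ∈ Xᶜ, (1 - x u))
            * (p ^ S.card * (1 - p) ^ (X \ S).card * f S) else 0) := Finset.sum_comm
    _ = ∑ S : Finset α, f S * (∏ u ∈ S, (p * x u)) * ∏ u ∈ Sᶜ, (1 - p * x u) := by
        apply Finset.sum_congr rfl
        intro S _
        rw [← Finset.sum_filter]
        have h1 : ∑ X ∈ univ.filter (fun X : Finset α => S ⊆ X),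
            (∏ u ∈ X, x u) * (∏ u ∈ Xᶜ, (1 - x u))
              * (p ^ S.card * (1 - p) ^ (X \ S).card * f S)
            = (p ^ S.card * f S) * ∑ X ∈ univ.filter (fun X : Finset α => S ⊆ X),
                (∏ u ∈ X, x u) * (∏ u ∈ Xᶜ, (1 - x u)) * (1 - p) ^ (X \ S).card := by
          rw [Finset.mul_sum]
          apply Finset.sum_congr rfl
          intro X _
          ring
        rw [h1, lemA]
        have h2 : ∏ u ∈ S, (p * x u) = p ^ S.card * ∏ u ∈ S, x u := by
          rw [Finset.prod_mul_distrib, Finset.prod_const]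
        rw [h2]
        ring
    _ = mlext f (fun u => p * x u) := rfl

/-- If `f` is nonnegative and submodular with multilinear extension `F`,
then for every `x ∈ [0,1]^E` and every real `k ≥ 1`, `F x ≤ k · F (x / k)`. -/
theorem mlext_le_scale
    {E : Type*} [Fintype E] [DecidableEq E]
    (f : Finset E → ℝ) (hf0 : ∀ X, 0 ≤ f X) (hsub : SubmodularFn f)
    (x : E → ℝ) (hx0 : ∀ u, 0 ≤ x u) (hx1 : ∀ u, x u ≤ 1)
    (k : ℝ) (hk : 1 ≤ k) :
    mlext f x ≤ k * mlext f (fun u => x u / k) := by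
  have hk0 : (0 : ℝ) < k := lt_of_lt_of_le one_pos hk
  have hp0 : (0 : ℝ) ≤ k⁻¹ := by positivity
  have hp1 : k⁻¹ ≤ 1 := by
    rw [inv_le_one_iff₀]
    right
    exact hk
  have hfun : (fun u => x u / k) = fun u => k⁻¹ * x u := by
    funext u
    rw [div_eq_mul_inv, mul_comm]
  rw [hfun, lemI]
  have hlhs : mlext f x
      = ∑ X : Finset E, (∏ u ∈ X, x u) * (∏ u ∈ Xᶜ, (1 - x u)) * f X := by
    rw [mlext]
    apply Finset.sum_congr rfl
    intro X _
    ring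
  rw [hlhs, Finset.mul_sum]
  apply Finset.sum_le_sum
  intro X _
  have hw : 0 ≤ (∏ u ∈ X, x u) * ∏ u ∈ Xᶜ, (1 - x u) :=
    mul_nonneg (Finset.prod_nonneg fun u _ => hx0 u)
      (Finset.prod_nonneg fun u _ => by linarith [hx1 u])
  have hB := lemB f hf0 hsub k⁻¹ hp0 hp1 X
  have hfk : f X ≤ k * mG f X k⁻¹ := by
    have h := mul_le_mul_of_nonneg_left hB (le_of_lt hk0)
    rwa [← mul_assoc, mul_inv_cancel₀ (ne_of_gt hk0), one_mul] at h
  calc (∏ u ∈ X, x u) * (∏ u ∈ Xᶜ, (1 - x u)) * f X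
      ≤ (∏ u ∈ X, x u) * (∏ u ∈ Xᶜ, (1 - x u)) * (k * mG f X k⁻¹) :=
        mul_le_mul_of_nonneg_left hfk hw
    _ = k * ((∏ u ∈ X, x u) * (∏ u ∈ Xᶜ, (1 - x u)) * mG f X k⁻¹) := by ring
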